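/- Let A and B be n×n real symmetric positive semidefinite matrices admitting a simultaneous diagonalization A = (T⁻¹)ᵀΛT⁻¹, B = (T⁻¹)ᵀMT⁻¹ with T nonsingular, Λ = diag(λ₁,…,λₙ), M = diag(μ₁,…,μₙ), all λᵢ, μᵢ ≥ 0, and λᵢ = 0 whenever μᵢ = 0 for indices with νᵢ defined. Define νᵢ = λᵢ/μᵢ if μᵢ > 0, νᵢ = 0 if λᵢ = 0, νᵢ = +∞ if λᵢ > 0 and μᵢ = 0, and assume ν₁ ≤ … ≤ νₙ. Then for each i with νᵢ < ∞, νᵢ is the smallest λ ≥ 0 for which there exists an i-dimensional subspace V of ℝⁿ such that the quadratic form of A − λB restricted to V is negative semidefinite; moreover the minimum is attained for V the span of the first i columns of T. -/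

import Mathlib

open Matrix

section Aux

variable {n : ℕ}

private lemma mulVec_eq_sum_cols (T : Matrix (Fin n) (Fin n) ℝ) (x : Fin n → ℝ) :
    T.mulVec x = ∑ j, x j • (fun r => T r j) := by
  funext r
  simp [Matrix.mulVec, dotProduct, Finset.sum_apply, mul_comm]

private lemma quadform_diag (T : Matrix (Fin n) (Fin n) ℝ) (hT : IsUnit T.det)
    (d : Fin n → ℝ) (x : Fin n → ℝ) :
    (T.mulVec x) ⬝ᵥ ((T⁻¹)ᵀ * Matrix.diagonal d * T⁻¹).mulVec (T.mulVec x)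
      = ∑ j, d j * x j ^ 2 := by
  have h1 : T⁻¹.mulVec (T.mulVec x) = x := by
    rw [mulVec_mulVec, Matrix.nonsing_inv_mul T hT, one_mulVec]
  calc (T.mulVec x) ⬝ᵥ ((T⁻¹)ᵀ * Matrix.diagonal d * T⁻¹).mulVec (T.mulVec x)
      = (T.mulVec x) ⬝ᵥ (T⁻¹)ᵀ.mulVec ((Matrix.diagonal d).mulVec (T⁻¹.mulVec (T.mulVec x))) := by
        simp only [mulVec_mulVec, Matrix.mul_assoc]
    _ = (T⁻¹.mulVec (T.mulVec x)) ⬝ᵥ ((Matrix.diagonal d).mulVec (T⁻¹.mulVec (T.mulVec x))) := by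
        rw [dotProduct_mulVec, vecMul_transpose]
    _ = x ⬝ᵥ (Matrix.diagonal d).mulVec x := by rw [h1]
    _ = ∑ j, d j * x j ^ 2 := by
        simp [dotProduct, mulVec_diagonal]
        exact Finset.sum_congr rfl fun j _ => by ring

/-- Membership representation for the span of a set of columns of `T`. -/
private lemma span_cols_rep (T : Matrix (Fin n) (Fin n) ℝ) (s : Finset (Fin n))
    (v : Fin n → ℝ)
    (hv : v ∈ Submodule.span ℝ ((fun j => (fun r => T r j)) '' (s : Set (Fin n)))) :
    ∃ x : Fin n → ℝ, (∀ j, j ∉ s → x j = 0) ∧ T.mulVec x = v := by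
  classical
  rw [Set.image_eq_range, Submodule.mem_span_range_iff_exists_fun] at hv
  obtain ⟨c, hc⟩ := hv
  refine ⟨fun j => if h : j ∈ s then c ⟨j, Finset.mem_coe.2 h⟩ else 0,
    fun j hj => by simp [hj], ?_⟩
  rw [mulVec_eq_sum_cols]
  calc (∑ j : Fin n, (if h : j ∈ s then c ⟨j, Finset.mem_coe.2 h⟩ else 0) • (fun r => T r j))
      = ∑ j ∈ s, (if h : j ∈ s then c ⟨j, Finset.mem_coe.2 h⟩ else 0) • (fun r => T r j) := by
        refine (Finset.sum_subset (Finset.subset_univ s) ?_).symm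
        intro j _ hj; simp [hj]
    _ = ∑ j : ((s : Set (Fin n)) : Type),
          (if h : (j : Fin n) ∈ s then c ⟨j, Finset.mem_coe.2 h⟩ else 0) • (fun r => T r (j : Fin n)) := by
        exact Finset.sum_subtype s (fun x => Finset.mem_coe.symm) _
    _ = ∑ j : ((s : Set (Fin n)) : Type), c j • (fun r => T r (j : Fin n)) := by
        refine Finset.sum_congr rfl fun j _ => ?_
        rw [dif_pos (Finset.mem_coe.1 j.2)]
    _ = v := hc

private lemma finrank_span_cols (T : Matrix (Fin n) (Fin n) ℝ) (hT : IsUnit T.det)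
    (s : Finset (Fin n)) :
    Module.finrank ℝ
      (Submodule.span ℝ ((fun j => (fun r => T r j)) '' (s : Set (Fin n)))) = s.card := by
  classical
  have hTu : IsUnit T := (Matrix.isUnit_iff_isUnit_det T).2 hT
  have hli : LinearIndependent ℝ (fun j : Fin n => Tᵀ j) :=
    Matrix.linearIndependent_cols_iff_isUnit.2 hTu
  have hli' : LinearIndependent ℝ (fun j : {j : Fin n // j ∈ s} => (fun r => T r (j : Fin n))) :=
    hli.comp (Subtype.val) Subtype.val_injective
  have himg : (fun j => (fun r => T r j)) '' (s : Set (Fin n))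
      = Set.range (fun j : {j : Fin n // j ∈ s} => (fun r => T r (j : Fin n))) := by
    rw [Set.image_eq_range]
    rfl
  rw [himg, finrank_span_eq_card hli', Fintype.card_coe]

end Aux

/-- For simultaneously diagonalized PSD matrices A = (T⁻¹)ᵀΛT⁻¹, B = (T⁻¹)ᵀMT⁻¹ with
generalized eigenvalues νᵢ (νᵢ = λᵢ/μᵢ if μᵢ>0, 0 if λᵢ=0, ∞ if λᵢ>0 and μᵢ=0)
arranged in ascending order: for each i with νᵢ < ∞, νᵢ is the least λ ≥ 0 such that
A − λB is negative semidefinite on some (i+1)-dimensional subspace, and the minimum is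
attained at the span of the first i+1 columns of T. -/
theorem generalized_eigenvalue_minimax {n : ℕ}
    (A B T : Matrix (Fin n) (Fin n) ℝ) (hT : IsUnit T.det)
    (lam mu : Fin n → ℝ) (hlam : ∀ i, 0 ≤ lam i) (hmu : ∀ i, 0 ≤ mu i)
    (hAdec : A = (T⁻¹)ᵀ * Matrix.diagonal lam * T⁻¹)
    (hBdec : B = (T⁻¹)ᵀ * Matrix.diagonal mu * T⁻¹)
    (hA : A.PosSemidef) (hB : B.PosSemidef)
    (ν : Fin n → ENNReal)
    (hν1 : ∀ i, 0 < mu i → ν i = ENNReal.ofReal (lam i / mu i))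
    (hν2 : ∀ i, lam i = 0 → ν i = 0)
    (hν3 : ∀ i, 0 < lam i → mu i = 0 → ν i = ⊤)
    (hνmono : Monotone ν) :
    ∀ i : Fin n, ν i ≠ ⊤ →
      (IsLeast
        {l : ℝ | 0 ≤ l ∧ ∃ V : Submodule ℝ (Fin n → ℝ),
          Module.finrank ℝ V = (i : ℕ) + 1 ∧
          ∀ v ∈ V, v ⬝ᵥ (A - l • B).mulVec v ≤ 0}
        ((ν i).toReal)) ∧
      (Module.finrank ℝ
          (Submodule.span ℝ {c : Fin n → ℝ | ∃ j : Fin n, j ≤ i ∧ c = fun r => T r j})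
        = (i : ℕ) + 1) ∧
      (∀ v ∈ Submodule.span ℝ {c : Fin n → ℝ | ∃ j : Fin n, j ≤ i ∧ c = fun r => T r j},
        v ⬝ᵥ (A - (ν i).toReal • B).mulVec v ≤ 0) := by
  classical
  intro i hi
  -- the quadratic form in the coordinates of T
  have hform : ∀ (l : ℝ) (x : Fin n → ℝ),
      (T.mulVec x) ⬝ᵥ (A - l • B).mulVec (T.mulVec x)
        = ∑ j, (lam j - l * mu j) * x j ^ 2 := by
    intro l x
    have hM : A - l • B = (T⁻¹)ᵀ * Matrix.diagonal (fun j => lam j - l * mu j) * T⁻¹ := by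
      have hd : Matrix.diagonal lam - l • Matrix.diagonal mu
          = Matrix.diagonal (fun j => lam j - l * mu j) := by
        ext a b
        by_cases h : a = b <;>
          simp [Matrix.diagonal_apply, h, Matrix.sub_apply, Matrix.smul_apply]
      rw [hAdec, hBdec, ← Matrix.smul_mul, ← Matrix.mul_smul, ← Matrix.sub_mul,
        ← Matrix.mul_sub, hd]
    rw [hM, quadform_diag T hT]
  -- description of the candidate subspace as a span of columns
  have hset : {c : Fin n → ℝ | ∃ j : Fin n, j ≤ i ∧ c = fun r => T r j}
      = (fun j => (fun r => T r j)) '' ((Finset.Iic i : Finset (Fin n)) : Set (Fin n)) := by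
    ext c
    simp only [Set.mem_setOf_eq, Set.mem_image, Finset.coe_Iic, Set.mem_Iic]
    constructor
    · rintro ⟨j, hj, rfl⟩; exact ⟨j, hj, rfl⟩
    · rintro ⟨j, hj, rfl⟩; exact ⟨j, hj, rfl⟩
  -- coefficient nonpositivity for j ≤ i at level (ν i).toReal
  have hcoef_le : ∀ j : Fin n, j ≤ i → lam j - (ν i).toReal * mu j ≤ 0 := by
    intro j hj
    rcases lt_or_eq_of_le (hmu j) with hmj | hmj
    · -- mu j > 0
      have hνj : ν j = ENNReal.ofReal (lam j / mu j) := hν1 j hmj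
      have hle : ν j ≤ ν i := hνmono hj
      have hjne : ν j ≠ ⊤ := fun h => hi (top_le_iff.1 (h ▸ hle))
      have h1 : (ν j).toReal ≤ (ν i).toReal := ENNReal.toReal_mono hi hle
      have h2 : (ν j).toReal = lam j / mu j := by
        rw [hνj, ENNReal.toReal_ofReal (div_nonneg (hlam j) (le_of_lt hmj))]
      have : lam j / mu j ≤ (ν i).toReal := by rw [← h2]; exact h1
      have := (div_le_iff₀ hmj).1 this
      linarith
    · -- mu j = 0
      rcases lt_or_eq_of_le (hlam j) with hlj | hlj
      · -- lam j > 0 : then ν j = ⊤ ≤ ν i, contradiction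
        exact absurd (top_le_iff.1 ((hν3 j hlj hmj.symm) ▸ hνmono hj)) hi
      · rw [← hlj, ← hmj]; simp
  -- Part 3: negative semidefiniteness on the span of the first i+1 columns
  have hpart3 : ∀ v ∈ Submodule.span ℝ
        {c : Fin n → ℝ | ∃ j : Fin n, j ≤ i ∧ c = fun r => T r j},
      v ⬝ᵥ (A - (ν i).toReal • B).mulVec v ≤ 0 := by
    intro v hv
    rw [hset] at hv
    obtain ⟨x, hx0, hxv⟩ := span_cols_rep T (Finset.Iic i) v hv
    rw [← hxv, hform]
    apply Finset.sum_nonpos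
    intro j _
    by_cases hj : j ≤ i
    · have := hcoef_le j hj
      have hsq : (0:ℝ) ≤ x j ^ 2 := sq_nonneg _
      nlinarith
    · rw [hx0 j (by simpa [Finset.mem_Iic] using hj)]
      simp
  -- Part 2: dimension of the span
  have hpart2 : Module.finrank ℝ
      (Submodule.span ℝ {c : Fin n → ℝ | ∃ j : Fin n, j ≤ i ∧ c = fun r => T r j})
      = (i : ℕ) + 1 := by
    rw [hset, finrank_span_cols T hT, Fin.card_Iic]
  refine ⟨⟨⟨ENNReal.toReal_nonneg, _, hpart2, hpart3⟩, ?_⟩, hpart2, hpart3⟩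
  -- lower bound: any admissible l satisfies (ν i).toReal ≤ l
  rintro l ⟨hl0, V, hVdim, hVneg⟩
  by_contra hcon
  push_neg at hcon
  -- the complementary span W of columns j ≥ i
  set W := Submodule.span ℝ
    ((fun j => (fun r => T r j)) '' ((Finset.Ici i : Finset (Fin n)) : Set (Fin n))) with hW
  have hWdim : Module.finrank ℝ W = n - (i : ℕ) := by
    rw [hW, finrank_span_cols T hT, Fin.card_Ici]
  -- V ⊓ W is nontrivial
  have hsum : Module.finrank ℝ ↥(V ⊔ W) + Module.finrank ℝ ↥(V ⊓ W)
      = Module.finrank ℝ ↥V + Module.finrank ℝ ↥W :=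
    Submodule.finrank_sup_add_finrank_inf_eq V W
  have hsup_le : Module.finrank ℝ ↥(V ⊔ W) ≤ n := by
    simpa [Module.finrank_pi] using Submodule.finrank_le (V ⊔ W)
  have hint_pos : 0 < Module.finrank ℝ ↥(V ⊓ W) := by
    have hin : (i : ℕ) < n := i.isLt
    omega
  have hne : V ⊓ W ≠ ⊥ := by
    intro h
    rw [h] at hint_pos
    simp at hint_pos
  obtain ⟨v, hvVW, hv0⟩ := Submodule.exists_mem_ne_zero_of_ne_bot hne
  obtain ⟨x, hx0, hxv⟩ := span_cols_rep T (Finset.Ici i) v hvVW.2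
  have hx_ne : x ≠ 0 := by
    rintro rfl
    exact hv0 (by rw [← hxv]; simp)
  obtain ⟨j0, hj0⟩ : ∃ j, x j ≠ 0 := by
    by_contra h
    push_neg at h
    exact hx_ne (funext h)
  -- coefficient positivity for j ≥ i at level l
  have hcoef_pos : ∀ j : Fin n, i ≤ j → 0 < lam j - l * mu j := by
    intro j hj
    rcases lt_or_eq_of_le (hmu j) with hmj | hmj
    · have hνj : ν j = ENNReal.ofReal (lam j / mu j) := hν1 j hmj
      have hle : ν i ≤ ν j := hνmono hj
      have hjne : ν j ≠ ⊤ := by rw [hνj]; exact ENNReal.ofReal_ne_top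
      have h1 : (ν i).toReal ≤ (ν j).toReal := ENNReal.toReal_mono hjne hle
      have h2 : (ν j).toReal = lam j / mu j := by
        rw [hνj, ENNReal.toReal_ofReal (div_nonneg (hlam j) (le_of_lt hmj))]
      have : l < lam j / mu j := lt_of_lt_of_le hcon (h2 ▸ h1)
      have := (lt_div_iff₀ hmj).1 this
      linarith
    · rcases lt_or_eq_of_le (hlam j) with hlj | hlj
      · rw [← hmj]; linarith
      · -- lam j = 0, mu j = 0 : ν j = 0 so ν i = 0, contradicting 0 ≤ l < (ν i).toReal
        have hνj : ν j = 0 := hν2 j hlj.symm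
        have : ν i = 0 := le_antisymm (hνj ▸ hνmono hj) zero_le
        rw [this] at hcon
        simp at hcon
        linarith
  -- the quadratic form is positive at v, contradiction
  have hvV : v ∈ V := hvVW.1
  have hle0 := hVneg v hvV
  rw [← hxv, hform] at hle0
  have hpos : 0 < ∑ j, (lam j - l * mu j) * x j ^ 2 := by
    apply Finset.sum_pos'
    · intro j _
      by_cases hxj : x j = 0
      · simp [hxj]
      · have hj : i ≤ j := by
          by_contra h
          exact hxj (hx0 j (by simpa [Finset.mem_Ici] using h))
        have := hcoef_pos j hj
        positivity
    · refine ⟨j0, Finset.mem_univ _, ?_⟩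
      have hj : i ≤ j0 := by
        by_contra h
        exact hj0 (hx0 j0 (by simpa [Finset.mem_Ici] using h))
      have := hcoef_pos j0 hj
      have hsq : 0 < x j0 ^ 2 := by positivity
      positivity
  linarith
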